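/- For ε > 0, let β(ε) denote the unique β > e^{−1} with 1 − β − (1/(2e))·(log β)² = 1 − 3/(2e) − ε; set z(β) = e·β + log β and 𝒳(β) = e^{−1}·z(β)² − z(β)·β·(1 − exp(−z(β))). Then 𝒳(β(ε)) ∼ (e/3)·ε² as ε → 0+, i.e. 𝒳(β(ε))/((e/3)·ε²) → 1. -/

import Mathlib

open Real Filter Set Topology

noncomputable def zOf (β : ℝ) : ℝ := Real.exp 1 * β + Real.log β

noncomputable def XFluid (β : ℝ) : ℝ :=
  (Real.exp 1)⁻¹ * (zOf β) ^ 2 - zOf β * β * (1 - Real.exp (-(zOf β)))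


lemma KS_squeeze {f : ℝ → ℝ} {l C : ℝ}
    (h : ∀ u ∈ Ioo (0:ℝ) (1/2), |f u - l| ≤ C * u) :
    Tendsto f (𝓝[>] (0:ℝ)) (𝓝 l) := by
  have hmem : Ioo (0:ℝ) (1/2) ∈ 𝓝[>] (0:ℝ) :=
    Ioo_mem_nhdsGT_of_mem ⟨le_refl _, by norm_num⟩
  have hC : Tendsto (fun u : ℝ => C * u) (𝓝[>] (0:ℝ)) (𝓝 0) := by
    have h0 : Tendsto (fun u : ℝ => C * u) (𝓝 (0:ℝ)) (𝓝 (C * 0)) :=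
      (continuous_const.mul continuous_id).tendsto 0
    simpa using h0.mono_left nhdsWithin_le_nhds
  have h0 : Tendsto (fun u => |f u - l|) (𝓝[>] (0:ℝ)) (𝓝 0) :=
    squeeze_zero' (Eventually.of_forall fun _ => abs_nonneg _)
      (eventually_of_mem hmem h) hC
  have h1 : Tendsto (fun u => f u - l) (𝓝[>] (0:ℝ)) (𝓝 0) :=
    (tendsto_zero_iff_abs_tendsto_zero _).2 h0
  have := h1.add (tendsto_const_nhds (x := l))
  simpa using this

lemma KS_lim_a : Tendsto (fun u : ℝ => Real.log (1+u) / u) (𝓝[>] (0:ℝ)) (𝓝 1) := by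
  apply KS_squeeze (C := 2)
  intro u hu
  obtain ⟨h0, h1⟩ := hu
  have hx : |(-u)| < 1 := by rw [abs_neg, abs_of_pos h0]; linarith
  have key0 := Real.abs_log_sub_add_sum_range_le hx 1
  simp [Finset.sum_range_one, abs_neg, abs_of_pos h0] at key0
  -- key0 : |-u + log (1 + u)| ≤ u ^ 2 / (1 - u)
  have key : |Real.log (1+u) - u| ≤ 2 * u^2 := by
    have h2 : u ^ 2 / (1 - u) ≤ 2 * u ^ 2 := by
      rw [div_le_iff₀ (by linarith)]; nlinarith
    have : |Real.log (1+u) - u| = |-u + Real.log (1+u)| := by congr 1; ring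
    rw [this]; exact key0.trans h2
  rw [show Real.log (1+u)/u - 1 = (Real.log (1+u) - u)/u by field_simp]
  rw [abs_div, abs_of_pos h0, div_le_iff₀ h0]
  calc |Real.log (1+u) - u| ≤ 2*u^2 := key
    _ = 2*u*u := by ring

lemma KS_lim_b : Tendsto (fun u : ℝ => (u - Real.log (1+u)) / u^2) (𝓝[>] (0:ℝ)) (𝓝 (1/2)) := by
  apply KS_squeeze (C := 2)
  intro u hu
  obtain ⟨h0, h1⟩ := hu
  have hx : |(-u)| < 1 := by rw [abs_neg, abs_of_pos h0]; linarith
  have key0 := Real.abs_log_sub_add_sum_range_le hx 2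
  simp [Finset.sum_range_succ, abs_neg, abs_of_pos h0] at key0
  have key : |u - Real.log (1+u) - u^2/2| ≤ 2 * u^3 := by
    have h2 : u ^ 3 / (1 - u) ≤ 2 * u ^ 3 := by
      rw [div_le_iff₀ (by linarith)]; nlinarith [pow_pos h0 3]
    have h3 : |u - Real.log (1+u) - u^2/2| = |-u + u^2/(1+1) + Real.log (1+u)| := by
      rw [← abs_neg]; congr 1; ring
    rw [h3]; exact key0.trans h2
  have hu2 : (0:ℝ) < u^2 := pow_pos h0 2
  rw [show (u - Real.log (1+u))/u^2 - 1/2 = (u - Real.log (1+u) - u^2/2)/u^2 by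
    field_simp [h0.ne']]
  rw [abs_div, abs_of_pos hu2, div_le_iff₀ hu2]
  calc |u - Real.log (1+u) - u^2/2| ≤ 2*u^3 := key
    _ = 2*u*u^2 := by ring

lemma KS_lim_c : Tendsto (fun z : ℝ =>
    (Real.exp (-z) - (1 - z + z^2/2 - z^3/6)) / z^4) (𝓝[>] (0:ℝ)) (𝓝 (1/24)) := by
  apply KS_squeeze (C := 1)
  intro z hz
  obtain ⟨h0, h1⟩ := hz
  have hx : |(-z)| ≤ 1 := by rw [abs_neg, abs_of_pos h0]; linarith
  have key0 := Real.exp_bound hx (n := 5) (by norm_num)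
  have hsum : (∑ m ∈ Finset.range 5, (-z) ^ m / (Nat.factorial m : ℝ))
      = 1 - z + z^2/2 - z^3/6 + z^4/24 := by
    simp [Finset.sum_range_succ, Nat.factorial]; ring
  rw [hsum, abs_neg, abs_of_pos h0] at key0
  have key : |Real.exp (-z) - (1 - z + z^2/2 - z^3/6) - z^4/24| ≤ z^5/100 := by
    have h3 : |Real.exp (-z) - (1 - z + z^2/2 - z^3/6) - z^4/24|
        = |Real.exp (-z) - (1 - z + z^2/2 - z^3/6 + z^4/24)| := by congr 1; ring
    rw [h3]
    norm_num [Nat.factorial] at key0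
    linarith
  have hz4 : (0:ℝ) < z^4 := pow_pos h0 4
  rw [show (Real.exp (-z) - (1 - z + z^2/2 - z^3/6))/z^4 - 1/24
      = (Real.exp (-z) - (1 - z + z^2/2 - z^3/6) - z^4/24)/z^4 by
    field_simp [h0.ne']]
  rw [abs_div, abs_of_pos hz4, div_le_iff₀ hz4]
  calc |Real.exp (-z) - (1 - z + z^2/2 - z^3/6) - z^4/24| ≤ z^5/100 := key
    _ ≤ 1*z*z^4 := by nlinarith [pow_pos h0 5]

noncomputable def KSa (u : ℝ) : ℝ := Real.log (1+u) / u
noncomputable def KSb (u : ℝ) : ℝ := (u - Real.log (1+u)) / u^2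
noncomputable def KSz (u : ℝ) : ℝ := u + Real.log (1+u)
noncomputable def KSc (u : ℝ) : ℝ :=
  (Real.exp (-(KSz u)) - (1 - KSz u + (KSz u)^2/2 - (KSz u)^3/6)) / (KSz u)^4
noncomputable def KSR (u : ℝ) : ℝ :=
  12 * ((1 + KSa u)^2 * (1 + KSa u - KSb u)/2 - (1+u)*(1 + KSa u)^4/6
      + (1+u)*(1 + KSa u)^5 * u * KSc u) / (2 * KSb u + (KSa u)^2)^2

lemma KS_lim_z : Tendsto KSz (𝓝[>] (0:ℝ)) (𝓝[>] (0:ℝ)) := by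
  rw [tendsto_nhdsWithin_iff]
  constructor
  · have hcont : Tendsto KSz (𝓝 (0:ℝ)) (𝓝 (KSz 0)) := by
      apply ContinuousAt.tendsto
      unfold KSz
      exact continuousAt_id.add ((Real.continuousAt_log (by norm_num)).comp
        (continuous_const.add continuous_id).continuousAt)
    have : KSz 0 = 0 := by simp [KSz]
    rw [this] at hcont
    exact hcont.mono_left nhdsWithin_le_nhds
  · filter_upwards [self_mem_nhdsWithin] with u (hu : u ∈ Ioi (0:ℝ))
    have : 0 < Real.log (1+u) := Real.log_pos (by simpa using hu)
    exact add_pos hu this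

lemma KS_lim_cz : Tendsto KSc (𝓝[>] (0:ℝ)) (𝓝 (1/24)) := KS_lim_c.comp KS_lim_z

lemma KS_lim_u : Tendsto (fun u : ℝ => u) (𝓝[>] (0:ℝ)) (𝓝 0) :=
  tendsto_id.mono_left nhdsWithin_le_nhds

lemma KS_lim_R : Tendsto KSR (𝓝[>] (0:ℝ)) (𝓝 1) := by
  have h1 : Tendsto (fun u => 1 + KSa u) (𝓝[>] (0:ℝ)) (𝓝 2) := by
    have := tendsto_const_nhds (x := (1:ℝ)) (f := 𝓝[>] (0:ℝ)) |>.add KS_lim_a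
    norm_num at this; exact this
  have h1u : Tendsto (fun u : ℝ => 1 + u) (𝓝[>] (0:ℝ)) (𝓝 1) := by
    have := tendsto_const_nhds (x := (1:ℝ)) (f := 𝓝[>] (0:ℝ)) |>.add KS_lim_u
    norm_num at this; exact this
  have hnum : Tendsto (fun u => 12 * ((1 + KSa u)^2 * (1 + KSa u - KSb u)/2
      - (1+u)*(1 + KSa u)^4/6 + (1+u)*(1 + KSa u)^5 * u * KSc u))
      (𝓝[>] (0:ℝ)) (𝓝 4) := by
    have t1 : Tendsto (fun u => (1 + KSa u)^2 * (1 + KSa u - KSb u)/2)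
        (𝓝[>] (0:ℝ)) (𝓝 ((2:ℝ)^2 * (2 - 1/2)/2)) :=
      ((h1.pow 2).mul (h1.sub KS_lim_b)).div_const 2
    have t2 : Tendsto (fun u => (1+u)*(1 + KSa u)^4/6)
        (𝓝[>] (0:ℝ)) (𝓝 ((1:ℝ) * 2^4/6)) := (h1u.mul (h1.pow 4)).div_const 6
    have t3 : Tendsto (fun u => (1+u)*(1 + KSa u)^5 * u * KSc u)
        (𝓝[>] (0:ℝ)) (𝓝 ((1:ℝ) * 2^5 * 0 * (1/24))) :=
      ((h1u.mul (h1.pow 5)).mul KS_lim_u).mul KS_lim_cz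
    have := ((t1.sub t2).add t3).const_mul (12:ℝ)
    norm_num at this
    exact this
  have hden : Tendsto (fun u => (2 * KSb u + (KSa u)^2)^2)
      (𝓝[>] (0:ℝ)) (𝓝 4) := by
    have := ((KS_lim_b.const_mul (2:ℝ)).add (KS_lim_a.pow 2)).pow 2
    norm_num at this
    exact this
  have := hnum.div hden (by norm_num)
  norm_num at this
  exact this


lemma KS_tAnti {x y : ℝ} (hy : (Real.exp 1)⁻¹ ≤ y) (hxy : y < x) :
    1 - x - 1/(2*Real.exp 1) * (Real.log x)^2
      < 1 - y - 1/(2*Real.exp 1) * (Real.log y)^2 := by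
  set e := Real.exp 1 with he_def
  have he : (0:ℝ) < e := Real.exp_pos 1
  have hy0 : 0 < y := lt_of_lt_of_le (inv_pos.2 he) hy
  have hx0 : 0 < x := hy0.trans hxy
  have hly : -1 ≤ Real.log y := by
    have := Real.log_le_log (inv_pos.2 he) hy
    rwa [Real.log_inv, Real.log_exp] at this
  have hd : 0 < Real.log x - Real.log y := sub_pos.2 (Real.log_lt_log hy0 hxy)
  have hdle : Real.log x - Real.log y ≤ e * (x - y) := by
    have h1 : Real.log x - Real.log y = Real.log (x/y) :=
      (Real.log_div hx0.ne' hy0.ne').symm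
    have h2 : Real.log (x/y) ≤ x/y - 1 := Real.log_le_sub_one_of_pos (div_pos hx0 hy0)
    have h3 : x/y - 1 = (x - y)/y := by field_simp
    have hey : 1 ≤ e * y := by
      have := mul_le_mul_of_nonneg_left hy he.le
      rwa [mul_inv_cancel₀ he.ne'] at this
    have h4 : (x - y)/y ≤ e * (x - y) := by
      rw [div_le_iff₀ hy0]
      nlinarith
    linarith [h1 ▸ h2, h3 ▸ le_refl ((x-y)/y)]
  have hs : -2 < Real.log x + Real.log y := by nlinarith
  have key : 0 < 2*e*(x - y) + (Real.log x - Real.log y)*(Real.log x + Real.log y) := by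
    nlinarith [mul_pos hd (show (0:ℝ) < Real.log x + Real.log y + 2 by linarith)]
  have hrw : (1 - y - 1/(2*e) * (Real.log y)^2) - (1 - x - 1/(2*e) * (Real.log x)^2)
      = (2*e*(x - y) + (Real.log x - Real.log y)*(Real.log x + Real.log y)) * (1/(2*e)) := by
    field_simp
    ring
  linarith [hrw ▸ mul_pos key (by positivity : (0:ℝ) < 1/(2*e))]

lemma KS_Blim (B : ℝ → ℝ)
    (hB : ∀ ε : ℝ, 0 < ε →
      (Real.exp 1)⁻¹ < B ε ∧
        1 - B ε - 1 / (2 * Real.exp 1) * (Real.log (B ε)) ^ 2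
          = 1 - 3 / (2 * Real.exp 1) - ε) :
    Tendsto B (𝓝[>] (0:ℝ)) (𝓝 (Real.exp 1)⁻¹) := by
  set e := Real.exp 1 with he_def
  have he : (0:ℝ) < e := Real.exp_pos 1
  have htinv : 1 - e⁻¹ - 1/(2*e) * (Real.log e⁻¹)^2 = 1 - 3/(2*e) := by
    rw [Real.log_inv, Real.log_exp]
    field_simp
    ring
  rw [tendsto_order]
  constructor
  · intro a ha
    filter_upwards [self_mem_nhdsWithin] with ε (hε : ε ∈ Ioi (0:ℝ))
    exact ha.trans (hB ε hε).1
  · intro a ha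
    have hc : 0 < (1 - 3/(2*e)) - (1 - a - 1/(2*e) * (Real.log a)^2) := by
      have := KS_tAnti (x := a) (y := e⁻¹) le_rfl ha
      rw [htinv] at this
      linarith
    filter_upwards [Ioo_mem_nhdsGT_of_mem
      ⟨le_refl (0:ℝ), hc⟩] with ε hε
    obtain ⟨hε0, hεc⟩ := hε
    by_contra hcon
    push_neg at hcon
    have hle : 1 - B ε - 1/(2*e) * (Real.log (B ε))^2
        ≤ 1 - a - 1/(2*e) * (Real.log a)^2 := by
      rcases eq_or_lt_of_le hcon with h | h
      · rw [← h]
      · exact le_of_lt (KS_tAnti (le_of_lt ha) h)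
    have heq := (hB ε hε0).2
    rw [heq] at hle
    linarith

lemma KS_ulim (B : ℝ → ℝ)
    (hB : ∀ ε : ℝ, 0 < ε →
      (Real.exp 1)⁻¹ < B ε ∧
        1 - B ε - 1 / (2 * Real.exp 1) * (Real.log (B ε)) ^ 2
          = 1 - 3 / (2 * Real.exp 1) - ε) :
    Tendsto (fun ε => Real.exp 1 * B ε - 1) (𝓝[>] (0:ℝ)) (𝓝[>] (0:ℝ)) := by
  have he : (0:ℝ) < Real.exp 1 := Real.exp_pos 1
  rw [tendsto_nhdsWithin_iff]
  constructor
  · have := ((KS_Blim B hB).const_mul (Real.exp 1)).sub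
      (tendsto_const_nhds (x := (1:ℝ)))
    rw [mul_inv_cancel₀ he.ne'] at this
    simpa using this
  · filter_upwards [self_mem_nhdsWithin] with ε (hε : ε ∈ Ioi (0:ℝ))
    have h1 := (hB ε hε).1
    have : 1 < Real.exp 1 * B ε := by
      have := mul_lt_mul_of_pos_left h1 he
      rwa [mul_inv_cancel₀ he.ne'] at this
    simpa [Set.mem_Ioi] using sub_pos.2 this


set_option maxHeartbeats 2000000 in
/-- For `ε > 0` let `B ε` be the unique `β > e⁻¹` with
`1 - β - (1/(2e)) (log β)² = 1 - 3/(2e) - ε`. With `z β = e β + log β` and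
`𝒳 β = e⁻¹ z(β)² - z(β) β (1 - exp(-z β))`, one has `𝒳 (B ε) ∼ (e/3) ε²` as `ε → 0⁺`. -/
theorem karpSipser_leaves_asymptotic_at_extinction (B : ℝ → ℝ)
    (hB : ∀ ε : ℝ, 0 < ε →
      (Real.exp 1)⁻¹ < B ε ∧
        1 - B ε - 1 / (2 * Real.exp 1) * (Real.log (B ε)) ^ 2
          = 1 - 3 / (2 * Real.exp 1) - ε) :
    Filter.Tendsto (fun ε : ℝ => XFluid (B ε) / (Real.exp 1 / 3 * ε ^ 2))
      (𝓝[>] (0 : ℝ)) (𝓝 1) := by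
  have he : (0:ℝ) < Real.exp 1 := Real.exp_pos 1
  have key : ∀ ε : ℝ, 0 < ε →
      XFluid (B ε) / (Real.exp 1 / 3 * ε ^ 2) = KSR (Real.exp 1 * B ε - 1) := by
    intro ε hε
    obtain ⟨hβgt, heq⟩ := hB ε hε
    set e := Real.exp 1 with he_def
    set u : ℝ := e * B ε - 1 with hu_def
    have hβ0 : 0 < B ε := lt_trans (inv_pos.2 he) hβgt
    have hu0 : 0 < u := by
      rw [hu_def]
      have := mul_lt_mul_of_pos_left hβgt he
      rw [mul_inv_cancel₀ he.ne'] at this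
      linarith
    have h1u : e * B ε = 1 + u := by rw [hu_def]; ring
    have hβval : B ε = (1 + u) / e := by
      rw [← h1u]; field_simp
    have hLβ : Real.log (B ε) = Real.log (1+u) - 1 := by
      have h := Real.log_mul he.ne' hβ0.ne'
      rw [h1u, he_def, Real.log_exp] at h
      linarith
    set L : ℝ := Real.log (1+u) with hL_def
    have hLpos : 0 < L := Real.log_pos (by linarith)
    have hz0 : 0 < u + L := by linarith
    have hzOf : zOf (B ε) = u + L := by
      rw [zOf, hLβ, ← he_def, h1u]; ring
    have hεeq : ε = (2*u - 2*L + L^2) / (2*e) := by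
      have hε' : ε = B ε - 3/(2*e) + 1/(2*e)*(Real.log (B ε))^2 := by linarith
      rw [hε', hLβ, hβval]
      field_simp
      ring
    have hD : 2*u - 2*L + L^2 ≠ 0 := by
      have : 2*u - 2*L + L^2 = 2*e*ε := by rw [hεeq]; field_simp
      rw [this]; positivity
    have hKz : KSz u = u + L := by rw [KSz, hL_def]
    have hstep1 : (e⁻¹ * (u+L)^2 - (u+L) * ((1+u)/e) * (1 - Real.exp (-(u+L)))) /
        (e/3 * ((2*u-2*L+L^2)/(2*e))^2)
        = 12 * ((u+L)^2 - (u+L)*(1+u)*(1 - Real.exp (-(u+L)))) / (2*u-2*L+L^2)^2 := by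
      rw [div_eq_div_iff
        (mul_ne_zero (by positivity) (pow_ne_zero 2 (div_ne_zero hD (by positivity))))
        (pow_ne_zero 2 hD)]
      field_simp
      ring
    have hstep2 : KSR u
        = 12 * ((u+L)^2 - (u+L)*(1+u)*(1 - Real.exp (-(u+L)))) / (2*u-2*L+L^2)^2 := by
      have hcomb : 2 * KSb u + KSa u ^ 2 = (2*u-2*L+L^2)/u^2 := by
        rw [KSb, KSa, ← hL_def]
        field_simp
      rw [KSR, hcomb, KSa, KSb, KSc, hKz, ← hL_def]
      rw [div_eq_div_iff
        (pow_ne_zero 2 (div_ne_zero hD (pow_ne_zero 2 hu0.ne')))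
        (pow_ne_zero 2 hD)]
      field_simp
      ring
    rw [XFluid, hzOf, hβval, hεeq, hstep2]
    exact hstep1
  have hcomp := KS_lim_R.comp (KS_ulim B hB)
  refine hcomp.congr' ?_
  filter_upwards [self_mem_nhdsWithin] with ε (hε : ε ∈ Ioi (0:ℝ))
  exact (key ε hε).symm
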